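/- Let n ≥ 1 and let K := Sp_{2n}(ℝ) ∩ O_{2n}(ℝ). Every g ∈ Sp_{2n}(ℝ) can be written as g = q · 1(t) · k with q ∈ [P,P](ℝ), t ∈ ℝ_{>0}, and k ∈ K, where 1(t) := diag(t^{−1}, I_{n−1}, t, I_{n−1}); moreover the positive real number t is uniquely determined by g. Equivalently, Sp_{2n}(ℝ) is the disjoint union over t ∈ ℝ_{>0} of the double cosets [P,P](ℝ)·1(t)·K. -/

import Mathlib

open Matrix

/-- The standard symplectic structure matrix `J = (0, Iₙ; -Iₙ, 0)`. -/
def Jmat (F : Type*) [Field F] (n : ℕ) : Matrix (Fin n ⊕ Fin n) (Fin n ⊕ Fin n) F :=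
  Matrix.fromBlocks 0 1 (-1) 0

/-- `Sp_{2n}(F) = {g : g * J⁻¹ * gᵀ * J = 1}`. -/
def Sp (F : Type*) [Field F] (n : ℕ) : Set (Matrix (Fin n ⊕ Fin n) (Fin n ⊕ Fin n) F) :=
  {g | g * (Jmat F n)⁻¹ * gᵀ * Jmat F n = 1}

/-- `[P,P](F)`: elements of `Sp_{2n}(F)` of block form `(A, B; 0, (Aᵀ)⁻¹)` with `det A = 1`. -/
def SiegelPP (F : Type*) [Field F] (n : ℕ) :
    Set (Matrix (Fin n ⊕ Fin n) (Fin n ⊕ Fin n) F) :=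
  {g | g ∈ Sp F n ∧ ∃ A B : Matrix (Fin n) (Fin n) F,
    g = Matrix.fromBlocks A B 0 Aᵀ⁻¹ ∧ A.det = 1}

/-- The diagonal matrix `1(t) = diag(t^{−1}, I_{n−1}, t, I_{n−1})`. -/
noncomputable def oneMat (n : ℕ) (t : ℝ) : Matrix (Fin n ⊕ Fin n) (Fin n ⊕ Fin n) ℝ :=
  Matrix.diagonal (Sum.elim
    (fun i : Fin n => if (i : ℕ) = 0 then t⁻¹ else 1)
    (fun i : Fin n => if (i : ℕ) = 0 then t else 1))

section SpLemmas

variable {F : Type*} [Field F] {n : ℕ}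

lemma Jmat_mul_Jmat : Jmat F n * Jmat F n = -1 := by
  simp [Jmat, fromBlocks_multiply, ← fromBlocks_one, fromBlocks_neg]

lemma Jmat_inv : (Jmat F n)⁻¹ = -Jmat F n := by
  apply inv_eq_right_inv
  rw [Matrix.mul_neg, Jmat_mul_Jmat, neg_neg]

lemma mem_sp_iff {g : Matrix (Fin n ⊕ Fin n) (Fin n ⊕ Fin n) F} :
    g ∈ Sp F n ↔ g * Jmat F n * gᵀ = Jmat F n := by
  constructor
  · intro h
    have h' : g * (Jmat F n)⁻¹ * gᵀ * Jmat F n = 1 := h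
    rw [Jmat_inv] at h'
    have : -(g * Jmat F n * gᵀ * Jmat F n) = 1 := by
      rw [← h']; noncomm_ring
    have h2 : g * Jmat F n * gᵀ * Jmat F n = -1 := by linear_combination (norm := noncomm_ring) -this
    calc g * Jmat F n * gᵀ = -(g * Jmat F n * gᵀ * Jmat F n * Jmat F n) := by
          rw [Matrix.mul_assoc (g * Jmat F n * gᵀ), Jmat_mul_Jmat]; noncomm_ring
      _ = Jmat F n := by rw [h2]; noncomm_ring
  · intro h
    show g * (Jmat F n)⁻¹ * gᵀ * Jmat F n = 1
    rw [Jmat_inv]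
    have : g * -Jmat F n * gᵀ * Jmat F n = -(g * Jmat F n * gᵀ * Jmat F n) := by noncomm_ring
    rw [this, h, Jmat_mul_Jmat, neg_neg]

lemma Jmat_det_mul_det : (Jmat F n).det * (Jmat F n).det = 1 := by
  have := congrArg Matrix.det (Jmat_mul_Jmat (F := F) (n := n))
  rw [Matrix.det_mul] at this
  rw [this]
  have h2 : (-1 : Matrix (Fin n ⊕ Fin n) (Fin n ⊕ Fin n) F) = -(1 : Matrix _ _ F) := rfl
  rw [h2, Matrix.det_neg, Matrix.det_one, Fintype.card_sum, Fintype.card_fin]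
  simp [← pow_add, ← two_mul, pow_mul]

lemma sp_isUnit {g : Matrix (Fin n ⊕ Fin n) (Fin n ⊕ Fin n) F} (hg : g ∈ Sp F n) : IsUnit g := by
  rw [mem_sp_iff] at hg
  have hd := congrArg Matrix.det hg
  rw [Matrix.det_mul, Matrix.det_mul, Matrix.det_transpose] at hd
  rw [Matrix.isUnit_iff_isUnit_det]
  refine IsUnit.of_mul_eq_one ((Jmat F n).det * g.det * (Jmat F n).det) ?_
  calc g.det * ((Jmat F n).det * g.det * (Jmat F n).det)
      = (g.det * (Jmat F n).det * g.det) * (Jmat F n).det := by ring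
    _ = (Jmat F n).det * (Jmat F n).det := by rw [hd]
    _ = 1 := Jmat_det_mul_det

lemma sp_mul {g h : Matrix (Fin n ⊕ Fin n) (Fin n ⊕ Fin n) F} (hg : g ∈ Sp F n)
    (hh : h ∈ Sp F n) : g * h ∈ Sp F n := by
  rw [mem_sp_iff] at *
  rw [Matrix.transpose_mul]
  calc g * h * (Jmat F n) * (hᵀ * gᵀ) = g * (h * Jmat F n * hᵀ) * gᵀ := by noncomm_ring
    _ = Jmat F n := by rw [hh, hg]

lemma sp_transpose {g : Matrix (Fin n ⊕ Fin n) (Fin n ⊕ Fin n) F} (hg : g ∈ Sp F n) :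
    gᵀ ∈ Sp F n := by
  have hu := sp_isUnit hg
  rw [mem_sp_iff] at *
  have h1 : g * (Jmat F n * gᵀ * (-Jmat F n)) = 1 := by
    calc g * (Jmat F n * gᵀ * (-Jmat F n)) = -(g * Jmat F n * gᵀ * Jmat F n) := by noncomm_ring
      _ = -(Jmat F n * Jmat F n) := by rw [hg]
      _ = 1 := by rw [Jmat_mul_Jmat, neg_neg]
  have h2 : (Jmat F n * gᵀ * (-Jmat F n)) * g = 1 := mul_eq_one_comm.mp h1
  have e : Jmat F n * (Jmat F n * gᵀ * (-Jmat F n) * g)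
      = (Jmat F n * Jmat F n) * gᵀ * (-Jmat F n) * g := by noncomm_ring
  rw [Jmat_mul_Jmat] at e
  have e2 : ((-1 : Matrix (Fin n ⊕ Fin n) (Fin n ⊕ Fin n) F)) * gᵀ * (-Jmat F n) * g
      = gᵀ * Jmat F n * g := by noncomm_ring
  rw [e2] at e
  rw [transpose_transpose, ← e, h2, Matrix.mul_one]

lemma sp_inv {g : Matrix (Fin n ⊕ Fin n) (Fin n ⊕ Fin n) F} (hg : g ∈ Sp F n) :
    g⁻¹ ∈ Sp F n := by
  have hu := sp_isUnit hg
  have hud : IsUnit g.det := (Matrix.isUnit_iff_isUnit_det g).mp hu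
  have hudT : IsUnit gᵀ.det := by rwa [Matrix.det_transpose]
  rw [mem_sp_iff] at *
  rw [Matrix.transpose_nonsing_inv]
  calc g⁻¹ * Jmat F n * gᵀ⁻¹ = g⁻¹ * (g * Jmat F n * gᵀ) * gᵀ⁻¹ := by rw [hg]
    _ = (g⁻¹ * g) * Jmat F n * (gᵀ * gᵀ⁻¹) := by noncomm_ring
    _ = Jmat F n := by rw [Matrix.nonsing_inv_mul _ hud, Matrix.mul_nonsing_inv _ hudT,
          Matrix.one_mul, Matrix.mul_one]

lemma sp_fromBlocks {A B D : Matrix (Fin n) (Fin n) F} (h1 : A * Dᵀ = 1) (h2 : D * Aᵀ = 1)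
    (h3 : A * Bᵀ = B * Aᵀ) : fromBlocks A B 0 D ∈ Sp F n := by
  rw [mem_sp_iff]
  rw [Jmat, fromBlocks_transpose, fromBlocks_multiply, fromBlocks_multiply]
  simp [h1, h2, ← h3]

end SpLemmas

section OneMat

/-- auxiliary diagonal matrix `diag(t, 1, …, 1)`. -/
noncomputable def dmat (n : ℕ) (t : ℝ) : Matrix (Fin n) (Fin n) ℝ :=
  Matrix.diagonal (fun i : Fin n => if (i : ℕ) = 0 then t else 1)

lemma oneMat_eq_fromBlocks (n : ℕ) (t : ℝ) :
    oneMat n t = fromBlocks (dmat n t⁻¹) 0 0 (dmat n t) := by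
  rw [dmat, dmat, fromBlocks_diagonal]; rfl

lemma dmat_mul (n : ℕ) (a b : ℝ) : dmat n a * dmat n b = dmat n (a * b) := by
  rw [dmat, dmat, dmat, diagonal_mul_diagonal]
  have : (fun i : Fin n => (if (i : ℕ) = 0 then a else 1) * if (i : ℕ) = 0 then b else 1)
      = fun i : Fin n => if (i : ℕ) = 0 then a * b else 1 := by
    funext i; by_cases h : (i : ℕ) = 0 <;> simp [h]
  rw [this]

lemma dmat_one (n : ℕ) : dmat n 1 = 1 := by
  rw [dmat]; convert diagonal_one; split <;> rfl

lemma dmat_transpose (n : ℕ) (a : ℝ) : (dmat n a)ᵀ = dmat n a := diagonal_transpose _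

lemma dmat_det (n : ℕ) (hn : 1 ≤ n) (a : ℝ) : (dmat n a).det = a := by
  haveI : NeZero n := ⟨by omega⟩
  rw [dmat, det_diagonal]
  have h : ∀ i : Fin n, ((i : ℕ) = 0) = (i = 0) := fun i => by
    rw [Fin.ext_iff]; simp
  simp only [h]
  rw [Finset.prod_ite_eq' Finset.univ (0 : Fin n) (fun _ => a)]
  simp

lemma dmat_inv (n : ℕ) (a : ℝ) (ha : a ≠ 0) : (dmat n a)⁻¹ = dmat n a⁻¹ := by
  apply Matrix.inv_eq_right_inv
  rw [dmat_mul, mul_inv_cancel₀ ha, dmat_one]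

lemma oneMat_mul (n : ℕ) (a b : ℝ) : oneMat n a * oneMat n b = oneMat n (a * b) := by
  rw [oneMat_eq_fromBlocks, oneMat_eq_fromBlocks, oneMat_eq_fromBlocks, fromBlocks_multiply]
  simp [dmat_mul, mul_inv, mul_comm]

lemma oneMat_one (n : ℕ) : oneMat n 1 = 1 := by
  rw [oneMat_eq_fromBlocks, inv_one, dmat_one, fromBlocks_one]

lemma oneMat_transpose (n : ℕ) (t : ℝ) : (oneMat n t)ᵀ = oneMat n t := diagonal_transpose _

lemma oneMat_mem_sp {n : ℕ} {t : ℝ} (ht : t ≠ 0) : oneMat n t ∈ Sp ℝ n := by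
  rw [oneMat_eq_fromBlocks]
  apply sp_fromBlocks
  · rw [dmat_transpose, dmat_mul, inv_mul_cancel₀ ht, dmat_one]
  · rw [dmat_transpose, dmat_mul, mul_inv_cancel₀ ht, dmat_one]
  · simp

end OneMat

section PosDefLemmas

lemma ggT_posDef {m : Type*} [Fintype m] [DecidableEq m]
    {g : Matrix m m ℝ} (hu : IsUnit g) : (g * gᵀ).PosDef := by
  refine Matrix.PosDef.of_dotProduct_mulVec_pos ?_ ?_
  · rw [Matrix.IsHermitian, conjTranspose_eq_transpose_of_trivial, transpose_mul,
      transpose_transpose]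
  · intro x hx
    have hv : gᵀ *ᵥ x ≠ 0 := by
      have hinj : Function.Injective (gᵀ *ᵥ ·) := by
        rw [Matrix.mulVec_injective_iff_isUnit]
        rwa [Matrix.isUnit_iff_isUnit_det, Matrix.det_transpose, ← Matrix.isUnit_iff_isUnit_det]
      intro h
      apply hx
      apply hinj
      simpa using h
    have key : star x ⬝ᵥ (g * gᵀ) *ᵥ x = (gᵀ *ᵥ x) ⬝ᵥ (gᵀ *ᵥ x) := by
      rw [star_trivial, ← Matrix.mulVec_mulVec, Matrix.dotProduct_mulVec, ← Matrix.mulVec_transpose]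
    rw [key]
    have h0 : (0:ℝ) ≤ (gᵀ *ᵥ x) ⬝ᵥ (gᵀ *ᵥ x) := by
      simpa [star_trivial] using dotProduct_self_star_nonneg (R := ℝ) (gᵀ *ᵥ x)
    rcases h0.lt_or_eq with h | h
    · exact h
    · exact absurd (dotProduct_self_eq_zero.mp h.symm) hv

lemma block22_posDef {n : ℕ} {M : Matrix (Fin n ⊕ Fin n) (Fin n ⊕ Fin n) ℝ}
    (hM : M.PosDef) : (M.toBlocks₂₂).PosDef := by
  have h22 : M.toBlocks₂₂ = M.submatrix Sum.inr Sum.inr := rfl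
  refine Matrix.PosDef.of_dotProduct_mulVec_pos ?_ ?_
  · rw [h22]; exact hM.1.submatrix _
  · intro x hx
    have hy : (Sum.elim (0 : Fin n → ℝ) x) ≠ 0 := by
      intro h
      apply hx
      funext i
      exact congrFun h (Sum.inr i)
    have := hM.dotProduct_mulVec_pos hy
    convert this using 1
    simp [dotProduct, Matrix.mulVec, Fintype.sum_sum_type, toBlocks₂₂, dotProduct,
      star_trivial]

lemma psd_det_nonneg {m : Type*} [Fintype m] [DecidableEq m]
    {A : Matrix m m ℝ} (hA : A.PosSemidef) : 0 ≤ A.det := by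
  rw [hA.1.det_eq_prod_eigenvalues]
  have : ∀ i, (0:ℝ) ≤ hA.1.eigenvalues i := hA.eigenvalues_nonneg
  exact_mod_cast Finset.prod_nonneg fun i _ => this i

end PosDefLemmas

/-- The key determinant invariant: if `g = q · 1(t) · k` with `q` of Siegel block shape with
`det A = 1` and `k kᵀ = 1`, then `det ((g gᵀ)₂₂) = t²`. -/
lemma key_det {n : ℕ} (hn : 1 ≤ n) {g q k : Matrix (Fin n ⊕ Fin n) (Fin n ⊕ Fin n) ℝ}
    {t : ℝ} {A B : Matrix (Fin n) (Fin n) ℝ} (hq : q = fromBlocks A B 0 Aᵀ⁻¹)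
    (hA : A.det = 1) (hk : k * kᵀ = 1) (hgeq : g = q * oneMat n t * k) :
    ((g * gᵀ).toBlocks₂₂).det = t ^ 2 := by
  have hAu : IsUnit Aᵀ.det := by rw [Matrix.det_transpose, hA]; exact isUnit_one
  have hM : g * gᵀ = q * oneMat n (t * t) * qᵀ := by
    rw [hgeq]
    calc q * oneMat n t * k * (q * oneMat n t * k)ᵀ
        = q * oneMat n t * (k * kᵀ) * (oneMat n t)ᵀ * qᵀ := by
          rw [Matrix.transpose_mul, Matrix.transpose_mul]; noncomm_ring
      _ = q * (oneMat n t * oneMat n t) * qᵀ := by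
          rw [hk, Matrix.mul_one, oneMat_transpose]; noncomm_ring
      _ = q * oneMat n (t * t) * qᵀ := by rw [oneMat_mul]
  rw [hM, hq, oneMat_eq_fromBlocks, fromBlocks_transpose, fromBlocks_multiply,
    fromBlocks_multiply, toBlocks_fromBlocks₂₂]
  simp only [Matrix.zero_mul, Matrix.mul_zero, zero_add, add_zero]
  rw [Matrix.det_mul, Matrix.det_mul, Matrix.det_transpose, Matrix.det_nonsing_inv,
    Matrix.det_transpose, hA, dmat_det n hn]
  simp [sq]

theorem real_iwasawa_double_coset (n : ℕ) (hn : 1 ≤ n)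
    (g : Matrix (Fin n ⊕ Fin n) (Fin n ⊕ Fin n) ℝ) (hg : g ∈ Sp ℝ n) :
    ∃! t : ℝ, 0 < t ∧ ∃ q ∈ SiegelPP ℝ n, ∃ k ∈ Sp ℝ n,
      k * kᵀ = 1 ∧ g = q * oneMat n t * k := by
  haveI : NeZero n := ⟨by omega⟩
  have hgu : IsUnit g := sp_isUnit hg
  have hM : (g * gᵀ).PosDef := ggT_posDef hgu
  have hMsp : g * gᵀ ∈ Sp ℝ n := sp_mul hg (sp_transpose hg)
  have hMsym : (g * gᵀ)ᵀ = g * gᵀ := by rw [transpose_mul, transpose_transpose]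
  set M := g * gᵀ with hMdef
  -- block identities
  have hM21 : M.toBlocks₂₁ = (M.toBlocks₁₂)ᵀ := by
    ext i j
    have h := congrFun (congrFun hMsym (Sum.inr i)) (Sum.inl j)
    exact h.symm ▸ rfl
  have hJ : M * Jmat ℝ n * M = Jmat ℝ n := by
    have h := mem_sp_iff.mp hMsp
    rwa [hMsym] at h
  have hexp : fromBlocks M.toBlocks₁₁ M.toBlocks₁₂ M.toBlocks₂₁ M.toBlocks₂₂ * Jmat ℝ n *
      fromBlocks M.toBlocks₁₁ M.toBlocks₁₂ M.toBlocks₂₁ M.toBlocks₂₂ = Jmat ℝ n := by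
    rw [fromBlocks_toBlocks]; exact hJ
  rw [Jmat, fromBlocks_multiply, fromBlocks_multiply, fromBlocks_inj] at hexp
  obtain ⟨hba, hbb, hbc, hbd⟩ := hexp
  simp only [Matrix.mul_zero, Matrix.zero_mul, Matrix.mul_one, Matrix.mul_neg, Matrix.one_mul,
    zero_add, add_zero, Matrix.neg_mul] at hbb hbd
  -- hbb : -(M₁₂ * M₁₂) + M₁₁ * M₂₂ = 1 ; hbd : -(M₂₂ * M₁₂) + M₂₁ * M₂₂ = 0
  have h22 : (M.toBlocks₂₂).PosDef := block22_posDef hM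
  have h22detU : IsUnit (M.toBlocks₂₂).det := h22.det_pos.ne'.isUnit
  have hS : (M.toBlocks₂₂)⁻¹.PosDef := h22.inv
  open scoped MatrixOrder in set A := CFC.sqrt (M.toBlocks₂₂)⁻¹ with hAdef
  open scoped MatrixOrder in have hAA : A * A = (M.toBlocks₂₂)⁻¹ := CFC.sqrt_mul_sqrt_self _ hS.posSemidef.nonneg
  open scoped MatrixOrder in have hApsd : A.PosSemidef := (CFC.sqrt_nonneg _).posSemidef
  have hAsym : Aᵀ = A := by
    have h := hApsd.1
    rwa [Matrix.IsHermitian, conjTranspose_eq_transpose_of_trivial] at h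
  have hdetA : 0 < A.det := by
    have h1 : 0 ≤ A.det := psd_det_nonneg hApsd
    have h2 : A.det * A.det = ((M.toBlocks₂₂)⁻¹).det := by rw [← Matrix.det_mul, hAA]
    have h3 : 0 < ((M.toBlocks₂₂)⁻¹).det := hS.det_pos
    rcases h1.lt_or_eq with h | h
    · exact h
    · exfalso; rw [← h2, ← h] at h3; simp at h3
  have hAu : IsUnit A.det := hdetA.ne'.isUnit
  have hbd' : (M.toBlocks₁₂)ᵀ * M.toBlocks₂₂ = M.toBlocks₂₂ * M.toBlocks₁₂ := by
    rw [hM21] at hbd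
    have h := hbd
    rw [neg_add_eq_zero] at h
    exact h.symm
  have hcomm : (M.toBlocks₂₂)⁻¹ * (M.toBlocks₁₂)ᵀ = M.toBlocks₁₂ * (M.toBlocks₂₂)⁻¹ := by
    calc (M.toBlocks₂₂)⁻¹ * (M.toBlocks₁₂)ᵀ
        = (M.toBlocks₂₂)⁻¹ * ((M.toBlocks₁₂)ᵀ * M.toBlocks₂₂) * (M.toBlocks₂₂)⁻¹ := by
          rw [Matrix.mul_assoc ((M.toBlocks₂₂)⁻¹), Matrix.mul_assoc,
            Matrix.mul_nonsing_inv _ h22detU, Matrix.mul_one]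
      _ = (M.toBlocks₂₂)⁻¹ * (M.toBlocks₂₂ * M.toBlocks₁₂) * (M.toBlocks₂₂)⁻¹ := by rw [hbd']
      _ = M.toBlocks₁₂ * (M.toBlocks₂₂)⁻¹ := by
          rw [← Matrix.mul_assoc, Matrix.nonsing_inv_mul _ h22detU, Matrix.one_mul]
  have hbb' : M.toBlocks₁₁ * M.toBlocks₂₂ = 1 + M.toBlocks₁₂ * M.toBlocks₁₂ := by
    rw [← hbb]; abel
  have hM11 : M.toBlocks₁₁
      = (M.toBlocks₂₂)⁻¹ + M.toBlocks₁₂ * ((M.toBlocks₂₂)⁻¹ * (M.toBlocks₁₂)ᵀ) := by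
    calc M.toBlocks₁₁
        = M.toBlocks₁₁ * M.toBlocks₂₂ * (M.toBlocks₂₂)⁻¹ := by
          rw [Matrix.mul_assoc, Matrix.mul_nonsing_inv _ h22detU, Matrix.mul_one]
      _ = (1 + M.toBlocks₁₂ * M.toBlocks₁₂) * (M.toBlocks₂₂)⁻¹ := by rw [hbb']
      _ = (M.toBlocks₂₂)⁻¹ + M.toBlocks₁₂ * (M.toBlocks₁₂ * (M.toBlocks₂₂)⁻¹) := by noncomm_ring
      _ = _ := by rw [← hcomm]
  -- the Siegel parabolic factor
  set Bm := M.toBlocks₁₂ * A with hBdef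
  set p := fromBlocks A Bm 0 A⁻¹ with hpdef
  have hATinv : (A⁻¹)ᵀ = A⁻¹ := by rw [Matrix.transpose_nonsing_inv, hAsym]
  have hp_sp : p ∈ Sp ℝ n := by
    apply sp_fromBlocks
    · rw [hATinv]; exact Matrix.mul_nonsing_inv _ hAu
    · rw [hAsym]; exact Matrix.nonsing_inv_mul _ hAu
    · rw [hBdef, Matrix.transpose_mul, hAsym]
      calc A * (A * (M.toBlocks₁₂)ᵀ) = (A * A) * (M.toBlocks₁₂)ᵀ := by rw [Matrix.mul_assoc]
        _ = (M.toBlocks₂₂)⁻¹ * (M.toBlocks₁₂)ᵀ := by rw [hAA]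
        _ = M.toBlocks₁₂ * (M.toBlocks₂₂)⁻¹ := hcomm
        _ = M.toBlocks₁₂ * (A * A) := by rw [hAA]
        _ = M.toBlocks₁₂ * A * A := by rw [Matrix.mul_assoc]
  have hppT : p * pᵀ = M := by
    rw [hpdef, fromBlocks_transpose, fromBlocks_multiply]
    conv_rhs => rw [← fromBlocks_toBlocks M]
    rw [fromBlocks_inj]
    refine ⟨?_, ?_, ?_, ?_⟩
    · calc A * Aᵀ + Bm * Bmᵀ
          = A * A + M.toBlocks₁₂ * (A * A) * (M.toBlocks₁₂)ᵀ := by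
            rw [hAsym, hBdef, Matrix.transpose_mul, hAsym]; noncomm_ring
        _ = (M.toBlocks₂₂)⁻¹ + M.toBlocks₁₂ * ((M.toBlocks₂₂)⁻¹ * (M.toBlocks₁₂)ᵀ) := by
            rw [hAA]; noncomm_ring
        _ = M.toBlocks₁₁ := hM11.symm
    · simp only [Matrix.transpose_zero, Matrix.mul_zero, zero_add, Matrix.zero_mul, add_zero, hATinv]
      rw [hBdef, Matrix.mul_assoc, Matrix.mul_nonsing_inv _ hAu, Matrix.mul_one]
    · simp only [Matrix.transpose_zero, Matrix.mul_zero, zero_add, Matrix.zero_mul, add_zero]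
      rw [hBdef, Matrix.transpose_mul, hAsym, ← Matrix.mul_assoc,
        Matrix.nonsing_inv_mul _ hAu, Matrix.one_mul, hM21]
    · simp only [Matrix.transpose_zero, Matrix.mul_zero, zero_add, Matrix.zero_mul, add_zero]
      rw [hATinv, ← Matrix.mul_inv_rev, hAA, Matrix.nonsing_inv_nonsing_inv _ h22detU]
  have hpdet : p.det = 1 := by
    rw [hpdef, det_fromBlocks_zero₂₁, Matrix.det_nonsing_inv, Ring.inverse_eq_inv',
      mul_inv_cancel₀ hdetA.ne']
  have hpdetU : IsUnit p.det := by rw [hpdet]; exact isUnit_one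
  have hpTdetU : IsUnit pᵀ.det := by rwa [Matrix.det_transpose]
  -- the maximal compact factor
  set k := p⁻¹ * g with hkdef
  have hk_sp : k ∈ Sp ℝ n := sp_mul (sp_inv hp_sp) hg
  have hkkT : k * kᵀ = 1 := by
    rw [hkdef, Matrix.transpose_mul, Matrix.transpose_nonsing_inv]
    calc p⁻¹ * g * (gᵀ * pᵀ⁻¹) = p⁻¹ * (g * gᵀ) * pᵀ⁻¹ := by noncomm_ring
      _ = p⁻¹ * (p * pᵀ) * pᵀ⁻¹ := by rw [← hMdef, ← hppT]
      _ = (p⁻¹ * p) * (pᵀ * pᵀ⁻¹) := by noncomm_ring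
      _ = 1 := by rw [Matrix.nonsing_inv_mul _ hpdetU, Matrix.mul_nonsing_inv _ hpTdetU,
            Matrix.one_mul]
  -- the scalar and the coset representative
  set t₀ : ℝ := (A.det)⁻¹ with ht₀def
  have ht₀ : 0 < t₀ := inv_pos.mpr hdetA
  set q := p * oneMat n A.det with hqdef
  have hqform : q = fromBlocks (A * dmat n (A.det)⁻¹) (Bm * dmat n A.det) 0
      ((A * dmat n (A.det)⁻¹)ᵀ)⁻¹ := by
    rw [hqdef, hpdef, oneMat_eq_fromBlocks, fromBlocks_multiply, fromBlocks_inj]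
    refine ⟨by simp, by simp, by simp, ?_⟩
    simp only [Matrix.zero_mul, zero_add, Matrix.mul_zero]
    rw [Matrix.transpose_mul, dmat_transpose, hAsym,
      Matrix.mul_inv_rev, dmat_inv _ _ (inv_ne_zero hdetA.ne'), inv_inv]
  have hqdet : (A * dmat n (A.det)⁻¹).det = 1 := by
    rw [Matrix.det_mul, dmat_det n hn, mul_inv_cancel₀ hdetA.ne']
  have hq_sp : q ∈ Sp ℝ n := sp_mul hp_sp (oneMat_mem_sp hdetA.ne')
  have hgq : g = q * oneMat n t₀ * k := by
    rw [hqdef, Matrix.mul_assoc p, oneMat_mul, ht₀def, mul_inv_cancel₀ hdetA.ne', oneMat_one,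
      Matrix.mul_one, hkdef, ← Matrix.mul_assoc, Matrix.mul_nonsing_inv _ hpdetU,
      Matrix.one_mul]
  refine ⟨t₀, ⟨ht₀, q, ⟨hq_sp, _, _, hqform, hqdet⟩, k, hk_sp, hkkT, hgq⟩, ?_⟩
  intro y hy
  obtain ⟨hy0, qy, ⟨hqySp, Ay, By, hqyform, hAydet⟩, ky, hkySp, hkykT, hgy⟩ := hy
  have h1 : ((g * gᵀ).toBlocks₂₂).det = y ^ 2 := key_det hn hqyform hAydet hkykT hgy
  have h2 : ((g * gᵀ).toBlocks₂₂).det = t₀ ^ 2 := key_det hn hqform hqdet hkkT hgq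
  have hsq : y ^ 2 = t₀ ^ 2 := by rw [← h1, h2]
  nlinarith [hy0, ht₀, hsq]
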